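/- Let B ∈ ℝ^{n×n} be a symmetric circulant matrix and H ∈ ℝ^{m×n} the uniform selection operator picking every ζ-th component, where n = ζm with ζ a positive integer. Then H B Hᵀ ∈ ℝ^{m×m} is a symmetric circulant matrix whose i-th eigenvalue (with respect to the m-point Fourier basis) is λ_i(H B Hᵀ) = (1/ζ) Σ_{r=0}^{ζ-1} λ_{i+rm}(B), where λ_j(B) denotes the j-th Fourier eigenvalue of B. -/

import Mathlib

open Matrix Polynomial

/-- The (unnormalised-frequency) `i`-th Fourier eigenvector of size-`m` circulant
matrices: `f^(i)_p = (1/√m) exp(-2πI i p / m)`. -/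
noncomputable def fourierVec (m : ℕ) [NeZero m] (i : ZMod m) : ZMod m → ℂ :=
  fun p => (1 / (Real.sqrt m : ℂ)) *
    Complex.exp (-(2 * Real.pi * Complex.I * (i.val : ℂ) * (p.val : ℂ)) / m)

/-- The `i`-th Fourier eigenvalue of a (circulant) matrix `A`, i.e. the `i`-th DFT
coefficient of its first column: `λ_i(A) = Σ_k A k 0 · exp(2πI i k / m)`. -/
noncomputable def fourierEig {m : ℕ} [NeZero m] (A : Matrix (ZMod m) (ZMod m) ℂ)
    (i : ZMod m) : ℂ :=
  ∑ k : ZMod m, A k 0 * Complex.exp (2 * Real.pi * Complex.I * (i.val : ℂ) * (k.val : ℂ) / m)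

/-- A matrix indexed by `ZMod m` is circulant iff it is invariant under simultaneous
cyclic shifts of rows and columns. -/
def IsCirculant {m : ℕ} {α : Type*} (A : Matrix (ZMod m) (ZMod m) α) : Prop :=
  ∀ i j d : ZMod m, A (i + d) (j + d) = A i j

/-- The uniform selection operator `H : ℝ^{m×n}` picking every `ζ`-th component:
`(Hx)_p = x_{ζ p}`. -/
noncomputable def selectionOp (ζ m n : ℕ) [NeZero m] [NeZero n] :
    Matrix (ZMod m) (ZMod n) ℝ :=
  Matrix.of fun p q => if q.val = ζ * p.val then 1 else 0

/-- The periodic second-difference (Laplacian) matrix with grid spacing `h`,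
stencil `(1, -2, 1)/h²` with periodic boundary conditions. -/
noncomputable def lap (m : ℕ) [NeZero m] (h : ℝ) : Matrix (ZMod m) (ZMod m) ℝ :=
  Matrix.of fun i j =>
    ((if i = j then (-2 : ℝ) else 0) + (if i = j + 1 then 1 else 0) +
      (if j = i + 1 then 1 else 0)) / h ^ 2

/-- The diffusion-modelled covariance matrix
`(σ² ν L / h) (I - L² Δ_h)^{-M}` on an `m`-point periodic grid. -/
noncomputable def diffCov (m : ℕ) [NeZero m] (σ ν L h : ℝ) (M : ℕ) :
    Matrix (ZMod m) (ZMod m) ℝ :=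
  (σ ^ 2 * ν * L / h) • ((1 - (L ^ 2) • lap m h) ^ M)⁻¹

/-- The spectral condition number `κ(A) = λ_max(A)/λ_min(A)` (via the real spectrum). -/
noncomputable def condNum {k : Type*} [Fintype k] [DecidableEq k]
    (A : Matrix k k ℝ) : ℝ :=
  sSup (spectrum ℝ A) / sInf (spectrum ℝ A)

section Helpers

lemma zval_lt {ζ m n : ℕ} [NeZero m] (hζ : 0 < ζ) (hn : n = ζ * m) (p : ZMod m) :
    ζ * p.val < n := by
  rw [hn]
  exact (Nat.mul_lt_mul_left hζ).mpr (ZMod.val_lt p)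

lemma sel_sum {ζ m n : ℕ} [NeZero m] [NeZero n] (hζ : 0 < ζ) (hn : n = ζ * m)
    (v : ZMod n → ℝ) (p : ZMod m) :
    (∑ a, selectionOp ζ m n p a * v a) = v ((ζ * p.val : ℕ) : ZMod n) := by
  rw [Finset.sum_eq_single ((ζ * p.val : ℕ) : ZMod n)]
  · simp only [selectionOp, Matrix.of_apply]
    rw [if_pos (ZMod.val_cast_of_lt (zval_lt hζ hn p)), one_mul]
  · intro b _ hb
    simp only [selectionOp, Matrix.of_apply]
    rw [if_neg, zero_mul]
    intro hbv
    exact hb (by rw [← ZMod.natCast_rightInverse b, hbv])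
  · simp

lemma selection_entry {ζ m n : ℕ} [NeZero m] [NeZero n] (hζ : 0 < ζ) (hn : n = ζ * m)
    (B : Matrix (ZMod n) (ZMod n) ℝ) (p q : ZMod m) :
    (selectionOp ζ m n * B * (selectionOp ζ m n)ᵀ) p q
      = B ((ζ * p.val : ℕ) : ZMod n) ((ζ * q.val : ℕ) : ZMod n) := by
  rw [Matrix.mul_apply]
  have : ∀ b, (selectionOp ζ m n * B) p b * (selectionOp ζ m n)ᵀ b q
      = selectionOp ζ m n q b * (selectionOp ζ m n * B) p b := by
    intro b; rw [Matrix.transpose_apply, mul_comm]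
  simp only [this]
  rw [sel_sum hζ hn, Matrix.mul_apply, sel_sum hζ hn]

lemma cast_shift {ζ m n : ℕ} [NeZero m] (hn : n = ζ * m) (p d : ZMod m) :
    ((ζ * (p + d).val : ℕ) : ZMod n)
      = ((ζ * p.val : ℕ) : ZMod n) + ((ζ * d.val : ℕ) : ZMod n) := by
  rw [show ((ζ * p.val : ℕ) : ZMod n) + ((ζ * d.val : ℕ) : ZMod n)
      = ((ζ * p.val + ζ * d.val : ℕ) : ZMod n) by push_cast; ring]
  rw [ZMod.natCast_eq_natCast_iff, hn, ZMod.val_add, ← Nat.mul_add]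
  exact (Nat.mod_modEq (p.val + d.val) m).mul_left' ζ

lemma exp_mod (n : ℕ) [NeZero n] (a b : ℕ) :
    Complex.exp (2 * Real.pi * Complex.I * ((a % n : ℕ) : ℂ) * b / n) =
    Complex.exp (2 * Real.pi * Complex.I * a * b / n) := by
  have hn : (n : ℂ) ≠ 0 := Nat.cast_ne_zero.mpr (NeZero.ne n)
  obtain ⟨q, hq⟩ : ∃ q, a = n * q + a % n := ⟨a / n, (Nat.div_add_mod a n).symm⟩
  conv_rhs => rw [hq]
  rw [show (2 * (Real.pi:ℂ) * Complex.I * ((n * q + a % n : ℕ) : ℂ) * b / n)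
      = (((q * b : ℕ) : ℤ) : ℂ) * (2 * Real.pi * Complex.I)
        + 2 * Real.pi * Complex.I * ((a % n : ℕ) : ℂ) * b / n by
    push_cast; field_simp]
  rw [Complex.exp_add, Complex.exp_int_mul_two_pi_mul_I, one_mul]

lemma root_sum (ζ : ℕ) (hζ : 0 < ζ) (v : ℕ) :
    (∑ r ∈ Finset.range ζ, Complex.exp (2 * Real.pi * Complex.I * r * v / ζ)) =
      if ζ ∣ v then (ζ : ℂ) else 0 := by
  have hz : (ζ : ℂ) ≠ 0 := Nat.cast_ne_zero.mpr hζ.ne'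
  have hπ : (2 * (Real.pi:ℂ) * Complex.I) ≠ 0 := by
    simp [Real.pi_ne_zero, Complex.I_ne_zero]
  set ω : ℂ := Complex.exp (2 * Real.pi * Complex.I * v / ζ) with hω
  have hterm : ∀ r : ℕ, Complex.exp (2 * Real.pi * Complex.I * r * v / ζ) = ω ^ r := by
    intro r
    rw [hω, ← Complex.exp_nat_mul]
    congr 1
    field_simp
  simp only [hterm]
  by_cases hdvd : ζ ∣ v
  · rw [if_pos hdvd]
    obtain ⟨c, rfl⟩ := hdvd
    have hω1 : ω = 1 := by
      rw [hω, show (2 * (Real.pi:ℂ) * Complex.I * ((ζ * c : ℕ) : ℂ) / ζ)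
          = ((c : ℤ) : ℂ) * (2 * Real.pi * Complex.I) by push_cast; field_simp]
      exact Complex.exp_int_mul_two_pi_mul_I c
    simp [hω1]
  · rw [if_neg hdvd]
    have hωn : ω ≠ 1 := by
      intro h
      rw [hω, Complex.exp_eq_one_iff] at h
      obtain ⟨k, hk⟩ := h
      apply hdvd
      have h2 : (v : ℂ) = (k : ℂ) * ζ := by
        field_simp at hk
        have h3 : (2 * (Real.pi:ℂ) * Complex.I) * v
            = (2 * Real.pi * Complex.I) * ((k : ℂ) * ζ) := by linear_combination (2 * (Real.pi:ℂ) * Complex.I) * hk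
        exact mul_left_cancel₀ hπ h3
      have h4 : (v : ℤ) = k * ζ := by exact_mod_cast h2
      exact Int.natCast_dvd_natCast.mp ⟨k, by linarith⟩
    rw [geom_sum_eq hωn]
    have hωζ : ω ^ ζ = 1 := by
      rw [hω, ← Complex.exp_nat_mul, show ((ζ:ℂ) * (2 * Real.pi * Complex.I * v / ζ))
          = ((v : ℤ) : ℂ) * (2 * Real.pi * Complex.I) by push_cast; field_simp]
      exact Complex.exp_int_mul_two_pi_mul_I v
    rw [hωζ, sub_self, zero_div]

end Helpers

/-- If `B` is a symmetric circulant `n×n` matrix and `H` is the uniform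
selection operator picking every `ζ`-th component (`n = ζ m`), then `H B Hᵀ` is a
symmetric circulant `m×m` matrix with Fourier eigenvalues
`λ_i(H B Hᵀ) = (1/ζ) Σ_{r<ζ} λ_{i+rm}(B)`. -/
theorem stmt1 (ζ m n : ℕ) [NeZero m] [NeZero n] (hζ : 0 < ζ) (hn : n = ζ * m)
    (B : Matrix (ZMod n) (ZMod n) ℝ) (hBcirc : IsCirculant B) (hBsymm : B.IsSymm)
    (H : Matrix (ZMod m) (ZMod n) ℝ) (hH : H = selectionOp ζ m n) :
    IsCirculant (H * B * H.transpose) ∧ (H * B * H.transpose).IsSymm ∧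
      ∀ i : ZMod m,
        fourierEig ((H * B * H.transpose).map Complex.ofReal) i =
          (1 / (ζ : ℂ)) * ∑ r ∈ Finset.range ζ,
            fourierEig (B.map Complex.ofReal) ((i.val + r * m : ℕ) : ZMod n) := by
  subst hH
  have hmC : (m:ℂ) ≠ 0 := Nat.cast_ne_zero.mpr (NeZero.ne m)
  have hzC : (ζ:ℂ) ≠ 0 := Nat.cast_ne_zero.mpr hζ.ne'
  have hnC : (n:ℂ) ≠ 0 := Nat.cast_ne_zero.mpr (NeZero.ne n)
  set S := selectionOp ζ m n with hS
  set E : ZMod m → ZMod n := fun k => ((ζ * k.val : ℕ) : ZMod n) with hE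
  have hEval : ∀ k : ZMod m, (E k).val = ζ * k.val :=
    fun k => ZMod.val_cast_of_lt (zval_lt hζ hn k)
  have hEinj : Function.Injective E := by
    intro k k' h
    have : ζ * k.val = ζ * k'.val := by rw [← hEval k, ← hEval k', h]
    have hv : k.val = k'.val := Nat.eq_of_mul_eq_mul_left hζ this
    rw [← ZMod.natCast_rightInverse k, ← ZMod.natCast_rightInverse k', hv]
  refine ⟨?_, ?_, ?_⟩
  · intro p q d
    rw [selection_entry hζ hn, selection_entry hζ hn, cast_shift hn, cast_shift hn]
    exact hBcirc _ _ _
  · show (S * B * Sᵀ)ᵀ = S * B * Sᵀ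
    rw [Matrix.transpose_mul, Matrix.transpose_mul, Matrix.transpose_transpose,
      ← Matrix.mul_assoc, hBsymm]
  · intro i
    -- entries of the compressed matrix
    have hzero : ((ζ * (0 : ZMod m).val : ℕ) : ZMod n) = 0 := by
      rw [ZMod.val_zero, Nat.mul_zero, Nat.cast_zero]
    have hLHS : fourierEig ((S * B * Sᵀ).map Complex.ofReal) i
        = ∑ k : ZMod m, ((B (E k) 0 : ℝ) : ℂ) *
            Complex.exp (2 * Real.pi * Complex.I * (i.val : ℂ) * (k.val : ℂ) / m) := by
      unfold fourierEig
      refine Finset.sum_congr rfl fun k _ => ?_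
      rw [Matrix.map_apply, selection_entry hζ hn, hzero]
    rw [hLHS]
    -- step 1: eliminate the `val` of the cast index
    have step1 : ∀ r : ℕ,
        fourierEig (B.map Complex.ofReal) ((i.val + r * m : ℕ) : ZMod n)
          = ∑ j : ZMod n, ((B j 0 : ℝ) : ℂ) *
              Complex.exp (2 * Real.pi * Complex.I * ((i.val + r * m : ℕ) : ℂ)
                * (j.val : ℂ) / n) := by
      intro r
      unfold fourierEig
      refine Finset.sum_congr rfl fun j _ => ?_
      rw [Matrix.map_apply]
      congr 1
      rw [ZMod.val_natCast]
      exact exp_mod n (i.val + r * m) j.val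
    rw [Finset.sum_congr rfl fun r _ => step1 r, Finset.sum_comm]
    -- step 2: sum over r for fixed j
    have step2 : ∀ j : ZMod n,
        (∑ r ∈ Finset.range ζ, ((B j 0 : ℝ) : ℂ) *
            Complex.exp (2 * Real.pi * Complex.I * ((i.val + r * m : ℕ) : ℂ)
              * (j.val : ℂ) / n))
          = ((B j 0 : ℝ) : ℂ) *
              Complex.exp (2 * Real.pi * Complex.I * (i.val : ℂ) * (j.val : ℂ) / n) *
              (if ζ ∣ j.val then (ζ : ℂ) else 0) := by
      intro j
      have hsplit : ∀ r : ℕ,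
          Complex.exp (2 * Real.pi * Complex.I * ((i.val + r * m : ℕ) : ℂ)
              * (j.val : ℂ) / n)
            = Complex.exp (2 * Real.pi * Complex.I * (i.val : ℂ) * (j.val : ℂ) / n) *
              Complex.exp (2 * Real.pi * Complex.I * (r : ℂ) * (j.val : ℂ) / ζ) := by
        intro r
        rw [← Complex.exp_add]
        congr 1
        have hnc : (n : ℂ) = (ζ : ℂ) * m := by rw [hn]; push_cast; ring
        rw [hnc]
        push_cast
        field_simp
      simp only [hsplit]
      rw [← Finset.mul_sum, ← Finset.mul_sum, root_sum ζ hζ j.val]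
      ring
    rw [Finset.sum_congr rfl fun j _ => step2 j]
    -- step 3: restrict to the image of E
    have himg : ∀ j : ZMod n, j ∈ Finset.univ.image E ↔ ζ ∣ j.val := by
      intro j
      constructor
      · rintro hj
        obtain ⟨k, _, rfl⟩ := Finset.mem_image.mp hj
        exact ⟨k.val, hEval k⟩
      · rintro ⟨c, hc⟩
        have hcm : c < m := by
          by_contra hcm
          push_neg at hcm
          have : n ≤ j.val := by
            rw [hc, hn]
            exact Nat.mul_le_mul_left ζ hcm
          exact absurd (ZMod.val_lt j) (not_lt.mpr this)
        refine Finset.mem_image.mpr ⟨(c : ZMod m), Finset.mem_univ _, ?_⟩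
        rw [hE]
        simp only
        rw [ZMod.val_cast_of_lt hcm, ← hc, ZMod.natCast_rightInverse j]
    have hvanish : ∀ j ∈ Finset.univ, j ∉ Finset.univ.image E →
        ((B j 0 : ℝ) : ℂ) *
            Complex.exp (2 * Real.pi * Complex.I * (i.val : ℂ) * (j.val : ℂ) / n) *
            (if ζ ∣ j.val then (ζ : ℂ) else 0) = 0 := by
      intro j _ hj
      rw [if_neg (fun h => hj ((himg j).mpr h)), mul_zero]
    rw [← Finset.sum_subset (Finset.subset_univ (Finset.univ.image E)) hvanish]
    rw [Finset.sum_image fun k _ k' _ h => hEinj h]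
    -- step 4: identify the two sums
    rw [Finset.mul_sum]
    refine Finset.sum_congr rfl fun k _ => ?_
    rw [if_pos ⟨k.val, hEval k⟩, hEval k]
    have hexp : Complex.exp (2 * Real.pi * Complex.I * (i.val : ℂ)
          * ((ζ * k.val : ℕ) : ℂ) / n)
        = Complex.exp (2 * Real.pi * Complex.I * (i.val : ℂ) * (k.val : ℂ) / m) := by
      congr 1
      rw [hn]
      push_cast
      field_simp
    rw [hexp]
    field_simp
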